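/- Let R be an F-finite F-pure Noetherian ring of prime characteristic p and let I = {I_n} be a filtration of ideals. If there exists a splitting φ: R^{1/p} → R of the Frobenius inclusion with φ((I_{np+1})^{1/p}) ⊆ I_{n+1} for all n ≥ 0, then for every e ≥ 1 there exists a splitting φ_e: R^{1/p^e} → R with φ_e((I_{np^e+s})^{1/p^e}) = I_{n+1} for all n ≥ 0 and all 1 ≤ s ≤ p^e. -/

import Mathlib

set_option maxHeartbeats 1000000
set_option synthInstance.maxHeartbeats 400000

noncomputable section

section Core
variable {R : Type*} [CommRing R]

/-- A Frobenius splitting: identifying `R^{1/p}` with `R` via `p`-th roots, an additive map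
`φ : R^{1/p} → R` which is `R`-linear (`φ(a^p b^{1/p}) = a φ(b^{1/p})`) and splits the
inclusion `R ⊆ R^{1/p}` (equivalently `φ 1 = 1`). -/
def IsFrobeniusSplitting (p : ℕ) (φ : R → R) : Prop :=
  (∀ a b : R, φ (a + b) = φ a + φ b) ∧ (∀ a b : R, φ (a ^ p * b) = a * φ b) ∧ φ 1 = 1

/-- A ring is `F`-split (`F`-pure in the `F`-finite case) if Frobenius splits. -/
def IsFSplitRing (p : ℕ) (A : Type*) [CommRing A] : Prop :=
  ∃ φ : A → A, IsFrobeniusSplitting p φ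

/-- `A` is `F`-finite: `A` is a finitely generated module over its subring of `p`-th powers. -/
def IsFFiniteRing (p : ℕ) (A : Type*) [CommRing A] : Prop :=
  ∃ (n : ℕ) (g : Fin n → A), ∀ x : A, ∃ c : Fin n → A, x = ∑ i, c i ^ p * g i

/-- A filtration of ideals. -/
def IsIdealFiltration (I : ℕ → Ideal R) : Prop :=
  I 0 = ⊤ ∧ (∀ n, I (n + 1) ≤ I n) ∧ ∀ m n, I m * I n ≤ I (m + n)

/-- An `F`-pure filtration. -/
def IsFPureFiltration (p : ℕ) (I : ℕ → Ideal R) : Prop :=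
  IsIdealFiltration I ∧ ∃ φ : R → R, IsFrobeniusSplitting p φ ∧
    ∀ n : ℕ, ∀ x ∈ I (n * p + 1), φ x ∈ I (n + 1)

/-- The Frobenius power `J^{[p]}` of an ideal. -/
def Ideal.frobPow (p : ℕ) (J : Ideal R) : Ideal R :=
  Ideal.span ((fun a => a ^ p) '' (J : Set R))

/-- The `n`-th symbolic power `I^{(n)}`. -/
def Ideal.symbPow (I : Ideal R) (n : ℕ) : Ideal R where
  carrier := {r : R | ∃ s : R, (∀ P ∈ I.minimalPrimes, s ∉ P) ∧ s * r ∈ I ^ n}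
  zero_mem' :=
    ⟨1, fun P hP h1 => hP.1.1.ne_top ((Ideal.eq_top_iff_one P).mpr h1), by simp⟩
  add_mem' := by
    rintro a b ⟨s, hs, hsa⟩ ⟨t, ht, htb⟩
    refine ⟨s * t, fun P hP hst => ((hP.1.1.mem_or_mem hst).elim (hs P hP) (ht P hP)), ?_⟩
    have h1 : (s * t) * (a + b) = t * (s * a) + s * (t * b) := by ring
    rw [h1]
    exact (I ^ n).add_mem (Ideal.mul_mem_left _ _ hsa) (Ideal.mul_mem_left _ _ htb)
  smul_mem' := by
    rintro c x ⟨s, hs, hsx⟩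
    refine ⟨s, hs, ?_⟩
    have h1 : s * (c • x) = c * (s * x) := by
      simp only [smul_eq_mul]; ring
    rw [h1]
    exact Ideal.mul_mem_left _ _ hsx

end Core


/-- For an `F`-pure filtration on an `F`-finite `F`-pure Noetherian ring of
characteristic `p`, the single splitting `φ` with `φ((I_{np+1})^{1/p}) ⊆ I_{n+1}` yields, for
every `e ≥ 1`, a splitting `φₑ` of the `e`-th Frobenius with
`φₑ((I_{np^e+s})^{1/p^e}) = I_{n+1}` for all `n ≥ 0` and `1 ≤ s ≤ p^e`. -/
theorem fPureFiltration_iterate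
    {R : Type*} [CommRing R] [IsNoetherianRing R]
    (p : ℕ) (hp : p.Prime) [CharP R p]
    (hFF : IsFFiniteRing p R) (hFP : IsFSplitRing p R)
    (I : ℕ → Ideal R) (hI : IsIdealFiltration I)
    (φ : R → R) (hφ : IsFrobeniusSplitting p φ)
    (hcomp : ∀ n : ℕ, ∀ x ∈ I (n * p + 1), φ x ∈ I (n + 1)) :
    ∀ e : ℕ, 1 ≤ e → ∃ φe : R → R, IsFrobeniusSplitting (p ^ e) φe ∧
      ∀ n s : ℕ, 1 ≤ s → s ≤ p ^ e →
        φe '' (I (n * p ^ e + s) : Set R) = (I (n + 1) : Set R) := by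
  obtain ⟨hI0, hIdec, hImul⟩ := hI
  obtain ⟨hadd, hlin, hone⟩ := hφ
  have hanti : Antitone I := antitone_nat_of_succ_le hIdec
  have hpow : ∀ k m : ℕ, 1 ≤ m → I k ^ m ≤ I (k * m) := by
    intro k m hm
    induction m with
    | zero => omega
    | succ m ih =>
      rcases Nat.eq_zero_or_pos m with rfl | hm'
      · simpa using le_refl (I k)
      · calc I k ^ (m + 1) = I k ^ m * I k := by ring
          _ ≤ I (k * m) * I k := Ideal.mul_mono_left (ih hm')
          _ ≤ I (k * m + k) := hImul _ _
          _ = I (k * (m + 1)) := by ring_nf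
  have hadd_e : ∀ e a b, φ^[e] (a + b) = φ^[e] a + φ^[e] b := by
    intro e
    induction e with
    | zero => intro a b; simp
    | succ e ih =>
      intro a b
      simp only [Function.iterate_succ_apply, hadd, ih]
  have hone_e : ∀ e, φ^[e] (1 : R) = 1 := by
    intro e
    induction e with
    | zero => simp
    | succ e ih => simp [Function.iterate_succ_apply, hone, ih]
  have hlin_e : ∀ e a b, φ^[e] (a ^ p ^ e * b) = a * φ^[e] b := by
    intro e
    induction e with
    | zero => intro a b; simp
    | succ e ih =>
      intro a b
      have h1 : a ^ p ^ (e + 1) = (a ^ p ^ e) ^ p := by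
        rw [← pow_mul, pow_succ]
      rw [Function.iterate_succ_apply, Function.iterate_succ_apply, h1, hlin, ih]
  have hroot : ∀ e y, φ^[e] (y ^ p ^ e) = y := by
    intro e y
    have := hlin_e e y 1
    simpa [hone_e e] using this
  have hA : ∀ e n x, x ∈ I (n * p ^ e + 1) → φ^[e] x ∈ I (n + 1) := by
    intro e
    induction e with
    | zero => intro n x hx; simpa using hx
    | succ e ih =>
      intro n x hx
      rw [Function.iterate_succ_apply]
      apply ih n
      have hx' : x ∈ I (n * p ^ e * p + 1) := by
        have : n * p ^ (e + 1) = n * p ^ e * p := by ring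
        rwa [this] at hx
      exact hcomp (n * p ^ e) x hx'
  intro e he
  have hpe : 1 ≤ p ^ e := Nat.one_le_pow _ _ hp.pos
  refine ⟨φ^[e], ⟨hadd_e e, hlin_e e, hone_e e⟩, ?_⟩
  intro n s hs1 hs2
  apply Set.Subset.antisymm
  · rintro _ ⟨x, hx, rfl⟩
    exact hA e n x (hanti (by omega) hx)
  · intro y hy
    refine ⟨y ^ p ^ e, ?_, hroot e y⟩
    have h1 : y ^ p ^ e ∈ I (n + 1) ^ p ^ e := Ideal.pow_mem_pow hy _
    have h2 : I (n + 1) ^ p ^ e ≤ I ((n + 1) * p ^ e) := hpow _ _ hpe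
    have h3 : I ((n + 1) * p ^ e) ≤ I (n * p ^ e + s) := hanti (by nlinarith)
    exact h3 (h2 h1)
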